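/- For all monounary algebras A and B: if A is embeddable into B, then MGen(A) ≤ MGen(B) in ℕ ∪ {∞}. -/

import Mathlib

/-- A monounary algebra: a type equipped with one unary operation. -/
structure MonoUnary : Type 1 where
  carrier : Type
  op : carrier → carrier

namespace MonoUnary

/-- The subalgebra of `A` generated by `X`: the closure of `X` under the operation. -/
def closure (A : MonoUnary) (X : Set A.carrier) : Set A.carrier :=
  {y | ∃ x ∈ X, ∃ n : ℕ, A.op^[n] x = y}

/-- Isomorphism of monounary algebras. -/
def Iso (A B : MonoUnary) : Prop :=
  ∃ e : A.carrier ≃ B.carrier, ∀ x, e (A.op x) = B.op (e x)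

/-- The monounary algebra induced on a subset closed under the operation. -/
def restrict (B : MonoUnary) (S : Set B.carrier) (hS : ∀ x ∈ S, B.op x ∈ S) : MonoUnary where
  carrier := ↥S
  op := fun x => ⟨B.op x.1, hS x.1 x.2⟩

/-- `A` is largely embeddable into `B`: `B` has a large subalgebra isomorphic to `A`,
i.e. a (nonempty, closed) subset `S` such that together with one extra element `b`
it generates the whole of `B`. -/
def LargeEmb (A B : MonoUnary) : Prop :=
  ∃ (S : Set B.carrier) (hS : ∀ x ∈ S, B.op x ∈ S), S.Nonempty ∧
    Iso A (B.restrict S hS) ∧ ∃ b : B.carrier, B.closure (S ∪ {b}) = Set.univ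

/-- One step in the network of large embeddings (symmetric closure of `⋖`). -/
def Step (A B : MonoUnary) : Prop := LargeEmb A B ∨ LargeEmb B A

/-- There is a path of length `n` between `A` and `B` in the network. -/
def HasPath (A B : MonoUnary) (n : ℕ) : Prop :=
  ∃ C : ℕ → MonoUnary, Iso (C 0) A ∧ Iso (C n) B ∧ ∀ i < n, Step (C i) (C (i + 1))

/-- The generator distance between monounary algebras, in `ℕ ∪ {∞}`. -/
noncomputable def dis (A B : MonoUnary) : ℕ∞ :=
  sInf {q : ℕ∞ | ∃ n : ℕ, q = (n : ℕ∞) ∧ HasPath A B n}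

/-- The minimum number of generators of `A`, `∞` if `A` is not finitely generated. -/
noncomputable def MGen (A : MonoUnary) : ℕ∞ :=
  sInf {q : ℕ∞ | ∃ X : Finset A.carrier, q = (X.card : ℕ∞) ∧ A.closure ↑X = Set.univ}

/-- A monounary algebra is connected iff any two elements have trajectories that meet. -/
def Connected (A : MonoUnary) : Prop :=
  ∀ a b : A.carrier, ∃ k m : ℕ, A.op^[k] a = A.op^[m] b

end MonoUnary

namespace MonoUnary

/-- An embedding of monounary algebras: an injective map commuting with the operations. -/
def Emb (A B : MonoUnary) : Prop :=
  ∃ h : A.carrier → B.carrier, Function.Injective h ∧ ∀ x, h (A.op x) = B.op (h x)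

end MonoUnary

/-- if `A` is embeddable into `B` then `MGen A ≤ MGen B`. -/
theorem mgen_le_of_emb (A B : MonoUnary) (h : MonoUnary.Emb A B) :
    MonoUnary.MGen A ≤ MonoUnary.MGen B := by
  classical
  obtain ⟨h, hinj, hcomm⟩ := h
  have hsemi : Function.Semiconj h A.op B.op := hcomm
  have hiter : ∀ (n : ℕ) (x : A.carrier), h (A.op^[n] x) = B.op^[n] (h x) :=
    fun n x => (hsemi.iterate_right n) x
  by_cases hA : Nonempty A.carrier
  · obtain ⟨a0⟩ := hA
    apply le_sInf
    rintro q ⟨Y, rfl, hY⟩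
    -- define φ : B.carrier → A.carrier
    set Q : B.carrier → ℕ → Prop := fun y n => ∃ a : A.carrier, B.op^[n] y = h a with hQ
    set φ : B.carrier → A.carrier := fun y =>
      if hy : ∃ n, Q y n then Classical.choose (Nat.find_spec hy) else a0 with hφdef
    refine le_trans (sInf_le ⟨Y.image φ, rfl, ?_⟩) ?_
    · apply Set.eq_univ_of_forall
      intro a
      have : h a ∈ Set.univ := Set.mem_univ _
      rw [← hY] at this
      obtain ⟨y, hyY, n, hn⟩ := this
      have hy : ∃ m, Q y m := ⟨n, a, hn⟩
      have hfind : Nat.find hy ≤ n := Nat.find_le ⟨a, hn⟩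
      have hspec : B.op^[Nat.find hy] y = h (Classical.choose (Nat.find_spec hy)) :=
        Classical.choose_spec (Nat.find_spec hy)
      refine ⟨φ y, Finset.mem_coe.mpr (Finset.mem_image_of_mem φ hyY), n - Nat.find hy, ?_⟩
      apply hinj
      rw [hiter]
      have hφ : φ y = Classical.choose (Nat.find_spec hy) := by rw [hφdef]; exact dif_pos hy
      rw [hφ, ← hspec, ← Function.iterate_add_apply, Nat.sub_add_cancel hfind, hn]
    · exact_mod_cast Nat.cast_le.mpr (Finset.card_image_le)
  · have h0 : MonoUnary.MGen A ≤ 0 := by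
      apply sInf_le
      refine ⟨∅, by simp, Set.eq_univ_of_forall fun a => absurd ⟨a⟩ hA⟩
    exact le_trans h0 zero_le
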